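/- For integers n, k, i with 1 ≤ i ≤ k ≤ n/2, the ratio C(n,i)·C(n-i,k-i)·C(n-k,k-i) / (C(n,k)·C(n-k,k)) is at most k^{2i}/ (n-2k)^i; in particular, Φ(i)/C(n,k)² ≤ k^{2i}/n^i · (1+o(1)) when k = o(n). -/

import Mathlib

/-- Key lemma: `C(m, k-i) * (m-k+1)^i ≤ C(m,k) * k^i` for `i ≤ k ≤ m`. -/
lemma aux_choose_step (m k : ℕ) (hk : k ≤ m) :
    ∀ i, i ≤ k → (m.choose (k - i)) * (m - k + 1) ^ i ≤ m.choose k * k ^ i := by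
  intro i
  induction i with
  | zero => simp
  | succ i ih =>
    intro hik
    have hik' : i ≤ k := Nat.le_of_succ_le hik
    have key : m.choose (k - (i + 1)) * (m - k + 1) ≤ m.choose (k - i) * k := by
      have hj : k - (i + 1) + 1 = k - i := by omega
      have h1 : m.choose (k - (i+1) + 1) * (k - (i+1) + 1)
          = m.choose (k - (i+1)) * (m - (k - (i+1))) := Nat.choose_succ_right_eq _ _
      rw [hj] at h1
      calc m.choose (k - (i + 1)) * (m - k + 1)
          ≤ m.choose (k - (i + 1)) * (m - (k - (i+1))) := by
            apply Nat.mul_le_mul_left; omega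
        _ = m.choose (k - i) * (k - i) := h1.symm
        _ ≤ m.choose (k - i) * k := by apply Nat.mul_le_mul_left; omega
    calc m.choose (k - (i+1)) * (m - k + 1) ^ (i+1)
        = (m.choose (k - (i+1)) * (m - k + 1)) * (m - k + 1) ^ i := by ring
      _ ≤ (m.choose (k - i) * k) * (m - k + 1) ^ i := Nat.mul_le_mul_right _ key
      _ = (m.choose (k - i) * (m - k + 1) ^ i) * k := by ring
      _ ≤ (m.choose k * k ^ i) * k := Nat.mul_le_mul_right _ (ih hik')
      _ = m.choose k * k ^ (i+1) := by ring

lemma aux_nat_ineq (n k i : ℕ) (hik : i ≤ k) (hkn : 2 * k ≤ n) :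
    n.choose i * (n - i).choose (k - i) * (n - k).choose (k - i) * (n - 2 * k + 1) ^ i
      ≤ n.choose k ^ 2 * k ^ (2 * i) := by
  have hkn' : k ≤ n := by omega
  have h1 : n.choose i * (n - i).choose (k - i) = n.choose k * k.choose i :=
    (Nat.choose_mul hik).symm
  have h2 : k.choose i ≤ k ^ i := Nat.choose_le_pow _ _
  have h3 : (n - k).choose (k - i) * (n - 2 * k + 1) ^ i ≤ (n - k).choose k * k ^ i := by
    have := aux_choose_step (n - k) k (by omega) i hik
    have hm : n - k - k + 1 = n - 2 * k + 1 := by omega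
    rwa [hm] at this
  have h4 : (n - k).choose k ≤ n.choose k := Nat.choose_le_choose k (by omega)
  calc n.choose i * (n - i).choose (k - i) * (n - k).choose (k - i) * (n - 2 * k + 1) ^ i
      = (n.choose k * k.choose i) * ((n - k).choose (k - i) * (n - 2 * k + 1) ^ i) := by
        rw [h1]; ring
    _ ≤ (n.choose k * k ^ i) * ((n - k).choose k * k ^ i) := by
        exact Nat.mul_le_mul (Nat.mul_le_mul_left _ h2) h3
    _ ≤ (n.choose k * k ^ i) * (n.choose k * k ^ i) := by
        exact Nat.mul_le_mul_left _ (Nat.mul_le_mul_right _ h4)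
    _ = n.choose k ^ 2 * k ^ (2 * i) := by rw [two_mul, pow_add]; ring

/-- Combinatorial bound: for `1 ≤ i ≤ k` and `2k ≤ n`,
`C(n,i)·C(n-i,k-i)·C(n-k,k-i) ≤ C(n,k)² · k^{2i}/(n-2k+1)^i`. -/
theorem choose_pair_ratio_bound (n k i : ℕ) (hi : 1 ≤ i) (hik : i ≤ k) (hkn : 2 * k ≤ n) :
    (n.choose i : ℝ) * ((n - i).choose (k - i) : ℝ) * ((n - k).choose (k - i) : ℝ)
      ≤ (n.choose k : ℝ) ^ 2 * (k : ℝ) ^ (2 * i) / ((n : ℝ) - 2 * k + 1) ^ i := by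
  have hcast : ((n : ℝ) - 2 * k + 1) = ((n - 2 * k + 1 : ℕ) : ℝ) := by
    push_cast [Nat.cast_sub hkn]; ring
  have hpos : (0 : ℝ) < ((n : ℝ) - 2 * k + 1) ^ i := by
    rw [hcast]
    positivity
  rw [le_div_iff₀ hpos]
  have h := aux_nat_ineq n k i hik hkn
  have := (Nat.cast_le (α := ℝ)).2 h
  push_cast at this
  rw [hcast]
  push_cast
  linarith [this]
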